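/- Let P be a reversible stochastic matrix with Perron vector π, and define μ(P) = min over nonempty proper subsets S ⊊ [n] of Σ_{i∈S} Σ_{j∉S} π_i P_{ij}. Then for every x ∈ ℝ^n, Q_P(x) = <x, x − Px>_π ≥ (μ(P)/(n−1)) · (max_i x_i − min_i x_i)². -/

import Mathlib

open Finset Matrix

def IsStochastic {n : ℕ} (P : Matrix (Fin n) (Fin n) ℝ) : Prop :=
  (∀ i j, 0 ≤ P i j) ∧ ∀ i, ∑ j, P i j = 1

def IsIrreducibleM {n : ℕ} (P : Matrix (Fin n) (Fin n) ℝ) : Prop :=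
  ∀ i j, ∃ k : ℕ, 0 < (P ^ k) i j

def IsReversible {n : ℕ} (π : Fin n → ℝ) (P : Matrix (Fin n) (Fin n) ℝ) : Prop :=
  ∀ i j, π i * P i j = π j * P j i

/-- `μ(P) = min_{∅ ⊊ S ⊊ [n]} ∑_{i ∈ S} ∑_{j ∉ S} π_i P_{ij}`. -/
noncomputable def muP {n : ℕ} (π : Fin n → ℝ) (P : Matrix (Fin n) (Fin n) ℝ) : ℝ :=
  sInf {m : ℝ | ∃ S : Finset (Fin n), S.Nonempty ∧ S ≠ Finset.univ ∧
    m = ∑ i ∈ S, ∑ j ∈ Sᶜ, π i * P i j}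

section aux
variable {n : ℕ} (π : Fin n → ℝ) (P : Matrix (Fin n) (Fin n) ℝ)

lemma muSet_finite : {m : ℝ | ∃ S : Finset (Fin n), S.Nonempty ∧ S ≠ Finset.univ ∧
    m = ∑ i ∈ S, ∑ j ∈ Sᶜ, π i * P i j}.Finite := by
  apply Set.Finite.subset (Set.finite_range
    (fun S : Finset (Fin n) => ∑ i ∈ S, ∑ j ∈ Sᶜ, π i * P i j))
  rintro m ⟨S, _, _, rfl⟩
  exact ⟨S, rfl⟩

lemma mu_le (S : Finset (Fin n)) (h1 : S.Nonempty) (h2 : S ≠ Finset.univ) :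
    muP π P ≤ ∑ i ∈ S, ∑ j ∈ Sᶜ, π i * P i j :=
  csInf_le (muSet_finite π P).bddBelow ⟨S, h1, h2, rfl⟩

lemma mu_nonneg (hn : 2 ≤ n) (hP : ∀ i j, 0 ≤ P i j) (hπ : ∀ i, 0 ≤ π i) :
    0 ≤ muP π P := by
  apply le_csInf
  · refine ⟨_, {(⟨0, by omega⟩ : Fin n)}, singleton_nonempty _, ?_, rfl⟩
    intro h
    have : (⟨1, by omega⟩ : Fin n) ∈ ({(⟨0, by omega⟩ : Fin n)} : Finset (Fin n)) := by
      rw [h]; exact mem_univ _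
    simp [Fin.ext_iff] at this
  · rintro m ⟨S, _, _, rfl⟩
    exact Finset.sum_nonneg fun i _ => Finset.sum_nonneg fun j _ =>
      mul_nonneg (hπ i) (hP i j)

lemma Qform (hP : IsStochastic P) (hrev : IsReversible π P) (x : Fin n → ℝ) :
    ∑ i, π i * x i * (x i - P.mulVec x i)
      = (1/2) * ∑ i, ∑ j, (π i * P i j) * (x i - x j)^2 := by
  have hA1 : ∑ i, ∑ j, π i * P i j * x i ^ 2 = ∑ i, π i * x i ^ 2 := by
    refine Finset.sum_congr rfl fun i _ => ?_
    have : ∑ j, π i * P i j * x i ^ 2 = (∑ j, P i j) * (π i * x i ^ 2) := by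
      rw [Finset.sum_mul]; exact Finset.sum_congr rfl fun j _ => by ring
    rw [this, hP.2 i, one_mul]
  have hA3 : ∑ i, ∑ j, π i * P i j * x j ^ 2 = ∑ i, π i * x i ^ 2 := by
    have h1 : ∑ i, ∑ j, π i * P i j * x j ^ 2 = ∑ j, ∑ i, π j * P j i * x j ^ 2 := by
      rw [Finset.sum_comm]
      exact Finset.sum_congr rfl fun j _ => Finset.sum_congr rfl fun i _ => by
        rw [hrev i j]
    rw [h1]
    refine Finset.sum_congr rfl fun j _ => ?_
    have : ∑ i, π j * P j i * x j ^ 2 = (∑ i, P j i) * (π j * x j ^ 2) := by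
      rw [Finset.sum_mul]; exact Finset.sum_congr rfl fun i _ => by ring
    rw [this, hP.2 j, one_mul]
  have hA2 : ∑ i, ∑ j, π i * P i j * (x i * x j) = ∑ i, π i * x i * P.mulVec x i := by
    refine Finset.sum_congr rfl fun i _ => ?_
    simp only [Matrix.mulVec, dotProduct]
    rw [Finset.mul_sum]
    exact Finset.sum_congr rfl fun j _ => by ring
  have expand : ∑ i, ∑ j, (π i * P i j) * (x i - x j)^2
      = (∑ i, ∑ j, π i * P i j * x i ^ 2) - 2 * (∑ i, ∑ j, π i * P i j * (x i * x j))
        + (∑ i, ∑ j, π i * P i j * x j ^ 2) := by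
    rw [Finset.mul_sum, ← Finset.sum_sub_distrib, ← Finset.sum_add_distrib]
    refine Finset.sum_congr rfl fun i _ => ?_
    rw [Finset.mul_sum, ← Finset.sum_sub_distrib, ← Finset.sum_add_distrib]
    refine Finset.sum_congr rfl fun j _ => ?_
    ring
  have L : ∑ i, π i * x i * (x i - P.mulVec x i)
      = (∑ i, π i * x i ^ 2) - ∑ i, π i * x i * P.mulVec x i := by
    rw [← Finset.sum_sub_distrib]
    exact Finset.sum_congr rfl fun i _ => by ring
  rw [L, expand, hA1, hA3, hA2]
  ring

end aux

theorem quadratic_form_ge_mu {n : ℕ} (hn : 2 ≤ n) (P : Matrix (Fin n) (Fin n) ℝ)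
    (π : Fin n → ℝ)
    (hP : IsStochastic P) (hirr : IsIrreducibleM P)
    (hπpos : ∀ i, 0 < π i) (hπsum : ∑ i, π i = 1)
    (hrev : IsReversible π P)
    (x : Fin n → ℝ) :
    ∑ i, π i * x i * (x i - P.mulVec x i)
      ≥ muP π P / (n - 1) *
        (Finset.univ.sup' ⟨⟨0, by omega⟩, Finset.mem_univ _⟩ x
          - Finset.univ.inf' ⟨⟨0, by omega⟩, Finset.mem_univ _⟩ x) ^ 2 := by
  classical
  set σ := Tuple.sort x with hσdef
  have hmono : Monotone (x ∘ σ) := Tuple.monotone_sort x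
  set N := n - 1 with hNdef
  have hN1 : 1 ≤ N := by omega
  have hNn : N + 1 = n := by omega
  -- sorted values (extended to ℕ by capping at N)
  set a : ℕ → ℝ := fun k => x (σ ⟨min k N, by omega⟩) with hadef
  have hamono : Monotone a := by
    intro k l hkl
    exact hmono (by simp only [Fin.mk_le_mk]; omega)
  set p : Fin n → ℕ := fun i => ((σ.symm i : ℕ)) with hpdef
  have hpN : ∀ i, p i ≤ N := fun i => by
    have := (σ.symm i).isLt; simp only [hpdef]; omega
  have hap : ∀ i, a (p i) = x i := by
    intro i
    have h1 : (⟨min (p i) N, by omega⟩ : Fin n) = σ.symm i := by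
      apply Fin.ext
      simp only [hpdef]
      have := (σ.symm i).isLt
      simp; omega
    show x (σ ⟨min (p i) N, by omega⟩) = x i
    rw [h1, Equiv.apply_symm_apply]
  set g : ℕ → ℝ := fun k => a (k + 1) - a k with hgdef
  have hg0 : ∀ k, 0 ≤ g k := fun k => sub_nonneg.mpr (hamono (Nat.le_succ k))
  have htel : ∀ u v : ℕ, u ≤ v → ∑ k ∈ Finset.Ico u v, g k = a v - a u := by
    intro u v huv
    rw [Finset.sum_Ico_eq_sub _ huv, Finset.sum_range_sub (f := a),
      Finset.sum_range_sub (f := a)]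
    ring
  have hsq : ∀ u v : ℕ, ∑ k ∈ Finset.Ico u v, g k ^ 2
      ≤ (∑ k ∈ Finset.Ico u v, g k) ^ 2 := by
    intro u v
    have hS : ∀ k ∈ Finset.Ico u v, g k ^ 2 ≤ g k * ∑ l ∈ Finset.Ico u v, g l := by
      intro k hk
      rw [sq]
      exact mul_le_mul_of_nonneg_left
        (Finset.single_le_sum (fun l _ => hg0 l) hk) (hg0 k)
    calc ∑ k ∈ Finset.Ico u v, g k ^ 2
        ≤ ∑ k ∈ Finset.Ico u v, g k * ∑ l ∈ Finset.Ico u v, g l :=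
          Finset.sum_le_sum hS
      _ = (∑ k ∈ Finset.Ico u v, g k) ^ 2 := by rw [← Finset.sum_mul, sq]
  set h : Fin n → Fin n → ℝ := fun i j => ∑ k ∈ Finset.Ico (p i) (p j), g k ^ 2
    with hhdef
  have hkey : ∀ i j, p i ≤ p j → h j i = 0 ∧ h i j ≤ (x i - x j) ^ 2 := by
    intro i j hij
    constructor
    · show (∑ k ∈ Finset.Ico (p j) (p i), g k ^ 2) = 0
      rw [Finset.Ico_eq_empty (by omega), Finset.sum_empty]
    · calc h i j ≤ (∑ k ∈ Finset.Ico (p i) (p j), g k) ^ 2 := hsq _ _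
        _ = (a (p j) - a (p i)) ^ 2 := by rw [htel _ _ hij]
        _ = (x i - x j) ^ 2 := by rw [hap, hap]; ring
  have hpair : ∀ i j, h i j + h j i ≤ (x i - x j) ^ 2 := by
    intro i j
    rcases le_total (p i) (p j) with hle | hle
    · obtain ⟨h0, hb⟩ := hkey i j hle
      rw [h0]; linarith
    · obtain ⟨h0, hb⟩ := hkey j i hle
      rw [h0]
      have hx : (x j - x i) ^ 2 = (x i - x j) ^ 2 := by ring
      linarith [hb]
  -- cuts
  set S : ℕ → Finset (Fin n) := fun k => univ.filter (fun i => p i ≤ k) with hSdef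
  have hμle : ∀ k, k < N → muP π P ≤ ∑ i ∈ S k, ∑ j ∈ (S k)ᶜ, π i * P i j := by
    intro k hk
    apply mu_le
    · refine ⟨σ ⟨0, by omega⟩, ?_⟩
      simp [hSdef, hpdef]
    · intro hU
      have hmem : σ ⟨N, by omega⟩ ∈ S k := hU ▸ mem_univ _
      simp [hSdef, hpdef] at hmem
      omega
  have hc : ∀ k : ℕ, (S k)ᶜ = univ.filter (fun j => k < p j) := by
    intro k
    ext j
    simp [hSdef]
  have hcut : ∀ k : ℕ, (∑ i ∈ S k, ∑ j ∈ (S k)ᶜ, π i * P i j) * g k ^ 2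
      = ∑ i, ∑ j, (if p i ≤ k ∧ k < p j then π i * P i j * g k ^ 2 else 0) := by
    intro k
    calc (∑ i ∈ S k, ∑ j ∈ (S k)ᶜ, π i * P i j) * g k ^ 2
        = ∑ i ∈ S k, ∑ j ∈ (S k)ᶜ, π i * P i j * g k ^ 2 := by
          rw [Finset.sum_mul]
          exact Finset.sum_congr rfl fun i _ => by rw [Finset.sum_mul]
      _ = ∑ i ∈ univ.filter (fun i => p i ≤ k),
            ∑ j, (if k < p j then π i * P i j * g k ^ 2 else 0) := by
          refine Finset.sum_congr rfl fun i _ => ?_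
          rw [hc k, Finset.sum_filter]
      _ = ∑ i, (if p i ≤ k then
            ∑ j, (if k < p j then π i * P i j * g k ^ 2 else 0) else 0) := by
          rw [Finset.sum_filter]
      _ = ∑ i, ∑ j, (if p i ≤ k ∧ k < p j then π i * P i j * g k ^ 2 else 0) := by
          refine Finset.sum_congr rfl fun i _ => ?_
          by_cases hik : p i ≤ k
          · simp only [hik, if_true, true_and]
          · simp only [hik, if_false, false_and]
            rw [Finset.sum_const, smul_zero]
  have hswap : ∑ k ∈ Finset.range N, (∑ i ∈ S k, ∑ j ∈ (S k)ᶜ, π i * P i j) * g k ^ 2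
      = ∑ i, ∑ j, (π i * P i j) * h i j := by
    calc ∑ k ∈ Finset.range N, (∑ i ∈ S k, ∑ j ∈ (S k)ᶜ, π i * P i j) * g k ^ 2
        = ∑ k ∈ Finset.range N, ∑ i, ∑ j,
            (if p i ≤ k ∧ k < p j then π i * P i j * g k ^ 2 else 0) :=
          Finset.sum_congr rfl fun k _ => hcut k
      _ = ∑ i, ∑ k ∈ Finset.range N, ∑ j,
            (if p i ≤ k ∧ k < p j then π i * P i j * g k ^ 2 else 0) :=
          Finset.sum_comm
      _ = ∑ i, ∑ j, ∑ k ∈ Finset.range N,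
            (if p i ≤ k ∧ k < p j then π i * P i j * g k ^ 2 else 0) :=
          Finset.sum_congr rfl fun i _ => Finset.sum_comm
      _ = ∑ i, ∑ j, (π i * P i j) * h i j := by
          refine Finset.sum_congr rfl fun i _ => Finset.sum_congr rfl fun j _ => ?_
          rw [← Finset.sum_filter]
          have hfil : (Finset.range N).filter (fun k => p i ≤ k ∧ k < p j)
              = Finset.Ico (p i) (p j) := by
            ext k
            simp only [Finset.mem_filter, Finset.mem_range, Finset.mem_Ico]
            have := hpN j
            omega
          rw [hfil]
          show _ = π i * P i j * ∑ k ∈ Finset.Ico (p i) (p j), g k ^ 2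
          rw [Finset.mul_sum]
  -- the quadratic form dominates the cut sum
  have hQT : ∑ i, ∑ j, (π i * P i j) * h i j
      ≤ ∑ i, π i * x i * (x i - P.mulVec x i) := by
    rw [Qform π P hP hrev x]
    have hsymm : (∑ i, ∑ j, (π i * P i j) * h j i)
        = ∑ i, ∑ j, (π i * P i j) * h i j := by
      rw [Finset.sum_comm]
      exact Finset.sum_congr rfl fun j _ => Finset.sum_congr rfl fun i _ => by
        rw [hrev i j]
    have h2 : (∑ i, ∑ j, (π i * P i j) * h i j) * 2
        = ∑ i, ∑ j, (π i * P i j) * (h i j + h j i) := by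
      have : ∑ i, ∑ j, (π i * P i j) * (h i j + h j i)
          = (∑ i, ∑ j, (π i * P i j) * h i j)
            + ∑ i, ∑ j, (π i * P i j) * h j i := by
        rw [← Finset.sum_add_distrib]
        refine Finset.sum_congr rfl fun i _ => ?_
        rw [← Finset.sum_add_distrib]
        exact Finset.sum_congr rfl fun j _ => by ring
      rw [this, hsymm]; ring
    have hle2 : ∑ i, ∑ j, (π i * P i j) * (h i j + h j i)
        ≤ ∑ i, ∑ j, (π i * P i j) * (x i - x j) ^ 2 := by
      refine Finset.sum_le_sum fun i _ => Finset.sum_le_sum fun j _ => ?_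
      exact mul_le_mul_of_nonneg_left (hpair i j)
        (mul_nonneg (hπpos i).le (hP.1 i j))
    nlinarith [h2, hle2]
  -- bounding the cut sum from below by μ
  have hμ0 : 0 ≤ muP π P := mu_nonneg π P hn hP.1 fun i => (hπpos i).le
  have hlow : muP π P * ∑ k ∈ Finset.range N, g k ^ 2
      ≤ ∑ k ∈ Finset.range N, (∑ i ∈ S k, ∑ j ∈ (S k)ᶜ, π i * P i j) * g k ^ 2 := by
    rw [Finset.mul_sum]
    refine Finset.sum_le_sum fun k hk => ?_
    exact mul_le_mul_of_nonneg_right (hμle k (Finset.mem_range.mp hk)) (sq_nonneg _)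
  -- identifying max and min
  have hsup : Finset.univ.sup' ⟨⟨0, by omega⟩, Finset.mem_univ _⟩ x = a N := by
    apply le_antisymm
    · apply Finset.sup'_le
      intro i _
      rw [← hap i]
      exact hamono (hpN i)
    · have : a N = x (σ ⟨min N N, by omega⟩) := rfl
      rw [this]
      exact Finset.le_sup' x (mem_univ _)
  have hinf : Finset.univ.inf' ⟨⟨0, by omega⟩, Finset.mem_univ _⟩ x = a 0 := by
    apply le_antisymm
    · have : a 0 = x (σ ⟨min 0 N, by omega⟩) := rfl
      rw [this]
      exact Finset.inf'_le x (mem_univ _)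
    · apply Finset.le_inf'
      intro i _
      rw [← hap i]
      exact hamono (Nat.zero_le _)
  have hgap : ∑ k ∈ Finset.range N, g k = a N - a 0 := by
    rw [Finset.range_eq_Ico]
    exact htel 0 N (Nat.zero_le _)
  -- Cauchy–Schwarz
  have hC : (∑ k ∈ Finset.range N, g k) ^ 2
      ≤ (N : ℝ) * ∑ k ∈ Finset.range N, g k ^ 2 := by
    have := sq_sum_le_card_mul_sum_sq (s := Finset.range N) (f := g)
    simpa using this
  have hNcast : (n : ℝ) - 1 = (N : ℝ) := by
    have hn' : n = N + 1 := by omega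
    rw [hn']; push_cast; ring
  have hNpos : (0 : ℝ) < (N : ℝ) := by exact_mod_cast hN1
  rw [ge_iff_le, hsup, hinf, hNcast]
  have step1 : muP π P / (N : ℝ) * (a N - a 0) ^ 2
      ≤ muP π P * ∑ k ∈ Finset.range N, g k ^ 2 := by
    rw [← hgap]
    have := mul_le_mul_of_nonneg_left hC (div_nonneg hμ0 hNpos.le)
    calc muP π P / (N : ℝ) * (∑ k ∈ Finset.range N, g k) ^ 2
        ≤ muP π P / (N : ℝ) * ((N : ℝ) * ∑ k ∈ Finset.range N, g k ^ 2) := this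
      _ = muP π P * ∑ k ∈ Finset.range N, g k ^ 2 := by
          field_simp
  calc muP π P / (N : ℝ) * (a N - a 0) ^ 2
      ≤ muP π P * ∑ k ∈ Finset.range N, g k ^ 2 := step1
    _ ≤ ∑ k ∈ Finset.range N, (∑ i ∈ S k, ∑ j ∈ (S k)ᶜ, π i * P i j) * g k ^ 2 := hlow
    _ = ∑ i, ∑ j, (π i * P i j) * h i j := hswap
    _ ≤ ∑ i, π i * x i * (x i - P.mulVec x i) := hQT
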